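/- Let (ω(t), g(t)) be the solution of ω' = -2p, g' = -2q on a Lie algebra g starting at (ω₀,g₀), and let c(t) > 0, φ(t) ∈ Aut(g) be differentiable with c(0)=1, φ(0)=I, D := φ'(0). If the starting curvature operators satisfy c'(0)I + (D - J₀D^tJ₀) = -2P(ω₀,g₀) and c'(0)I + (D + D^t) = -2Q(ω₀,g₀), then the solution is explicitly ω(t) = (c'(0)t+1) ω₀(e^{s(t)D}·, e^{s(t)D}·), g(t) = (c'(0)t+1) g₀(e^{s(t)D}·, e^{s(t)D}·), where s(t) = log(c'(0)t+1)/c'(0) if c'(0) ≠ 0 and s(t) = t otherwise. -/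

import Mathlib

open ContinuousLinearMap
open scoped RealInnerProductSpace

/-- Pullback `(ψ*ω)(X,Y) = ω(ψX, ψY)` of a bilinear form by an endomorphism. -/
noncomputable def pullForm {V : Type*} [NormedAddCommGroup V] [NormedSpace ℝ V]
    (ψ : V →L[ℝ] V) (ω : V →L[ℝ] V →L[ℝ] ℝ) : V →L[ℝ] V →L[ℝ] ℝ :=
  (((ω.comp ψ).flip).comp ψ).flip

lemma pullForm_apply {V : Type*} [NormedAddCommGroup V] [NormedSpace ℝ V]
    (ψ : V →L[ℝ] V) (ω : V →L[ℝ] V →L[ℝ] ℝ) (X Y : V) :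
    pullForm ψ ω X Y = ω (ψ X) (ψ Y) := rfl

lemma pullForm_one {V : Type*} [NormedAddCommGroup V] [NormedSpace ℝ V]
    (ω : V →L[ℝ] V →L[ℝ] ℝ) : pullForm (1 : V →L[ℝ] V) ω = ω := by
  ext X Y; rfl


lemma exp_comm_apply {V : Type*} [NormedAddCommGroup V] [NormedSpace ℝ V] [CompleteSpace V]
    (D : V →L[ℝ] V) (u : ℝ) (x : V) :
    NormedSpace.exp (u • D) (D x) = D (NormedSpace.exp (u • D) x) := by
  have hc : Commute D (u • D) := by
    ext y
    simp [mul_apply]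
  have h : Commute D (NormedSpace.exp (u • D)) := hc.exp_right
  have := congrArg (fun f : V →L[ℝ] V => f x) h.eq
  simpa [mul_apply] using this.symm

lemma exp_apply_hasDerivAt {V : Type*} [NormedAddCommGroup V] [NormedSpace ℝ V] [CompleteSpace V]
    (D : V →L[ℝ] V) (X : V) (s : ℝ) :
    HasDerivAt (fun u : ℝ => NormedSpace.exp (u • D) X)
      (NormedSpace.exp (s • D) (D X)) s := by
  have h := (hasDerivAt_exp_smul_const D s).clm_apply (hasDerivAt_const s X)
  simpa [mul_apply] using h

lemma exp_derivation_aut {V : Type*} [NormedAddCommGroup V] [NormedSpace ℝ V] [CompleteSpace V]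
    (L : V →L[ℝ] V →L[ℝ] V) (D : V →L[ℝ] V)
    (hD : ∀ X Y : V, D (L X Y) = L (D X) Y + L X (D Y)) (s : ℝ) (X Y : V) :
    NormedSpace.exp (s • D) (L X Y)
      = L (NormedSpace.exp (s • D) X) (NormedSpace.exp (s • D) Y) := by
  set ψ : ℝ → V →L[ℝ] V := fun u => NormedSpace.exp (u • D) with hψ
  set F : ℝ → V := fun u => NormedSpace.exp (u • (-D)) (L (ψ u X) (ψ u Y)) with hF
  have hFd : ∀ u : ℝ, HasDerivAt F 0 u := by
    intro u
    have hX : HasDerivAt (fun u => ψ u X) (D (ψ u X)) u := by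
      simpa [exp_comm_apply] using exp_apply_hasDerivAt D X u
    have hY : HasDerivAt (fun u => ψ u Y) (D (ψ u Y)) u := by
      simpa [exp_comm_apply] using exp_apply_hasDerivAt D Y u
    have hLX : HasDerivAt (fun u => L (ψ u X)) (L (D (ψ u X))) u :=
      L.hasFDerivAt.comp_hasDerivAt u hX
    have hB : HasDerivAt (fun u => L (ψ u X) (ψ u Y))
        (L (D (ψ u X)) (ψ u Y) + L (ψ u X) (D (ψ u Y))) u := hLX.clm_apply hY
    have hA : HasDerivAt (fun u : ℝ => NormedSpace.exp (u • (-D)))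
        (NormedSpace.exp (u • (-D)) * (-D)) u := hasDerivAt_exp_smul_const (-D) u
    have h := hA.clm_apply hB
    have h0 : ((NormedSpace.exp (u • (-D)) * (-D)) (L (ψ u X) (ψ u Y))
        + NormedSpace.exp (u • (-D))
            (L (D (ψ u X)) (ψ u Y) + L (ψ u X) (D (ψ u Y)))) = 0 := by
      rw [mul_apply_eq_comp, neg_apply, map_neg, hD, map_add]
      abel
    rw [h0] at h
    exact h
  have hdiff : Differentiable ℝ F := fun u => (hFd u).differentiableAt
  have hconst : F s = F 0 := by
    apply is_const_of_fderiv_eq_zero hdiff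
    intro u
    rw [(hFd u).hasFDerivAt.fderiv]
    ext
    simp
  have hF0 : F 0 = L X Y := by simp [hF, hψ]
  have hinv : NormedSpace.exp (s • D) * NormedSpace.exp (s • (-D)) = 1 := by
    letI : NormedAlgebra ℚ (V →L[ℝ] V) := NormedAlgebra.restrictScalars ℚ ℝ (V →L[ℝ] V)
    rw [← NormedSpace.exp_add_of_commute (by simp [smul_neg, Commute.neg_right])]
    simp
  have := congrArg (fun f : V →L[ℝ] V => f (L (ψ s X) (ψ s Y))) hinv
  simp only [mul_apply_eq_comp, one_apply_eq_self] at this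
  calc NormedSpace.exp (s • D) (L X Y)
      = NormedSpace.exp (s • D) (F s) := by rw [hconst, hF0]
    _ = L (ψ s X) (ψ s Y) := this

lemma hasDerivAt_flip {V : Type*} [NormedAddCommGroup V] [NormedSpace ℝ V]
    {f : ℝ → (V →L[ℝ] V →L[ℝ] ℝ)} {f' : V →L[ℝ] V →L[ℝ] ℝ} {t : ℝ}
    (h : HasDerivAt f f' t) : HasDerivAt (fun u => (f u).flip) f'.flip t := by
  set e := flipₗᵢ ℝ V V ℝ with he
  replace h := (hasDerivAt_iff_tendsto_slope (𝕜 := ℝ) (F := V →L[ℝ] V →L[ℝ] ℝ)).mp h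
  refine (hasDerivAt_iff_tendsto_slope (𝕜 := ℝ) (F := V →L[ℝ] V →L[ℝ] ℝ)).mpr ?_
  have h2 : Filter.Tendsto (slope (fun u => e (f u)) t) (nhdsWithin t {t}ᶜ) (nhds (e f')) := by
    have heq : slope (fun u => e (f u)) t = fun u => e (slope f t u) := by
      funext u; simp [slope, map_smul, map_sub]; exact congrArg _ (e.map_sub _ _).symm
    rw [heq]
    exact (e.continuous.tendsto f').comp h
  exact h2

lemma pull_hasDerivAt {V : Type*} [NormedAddCommGroup V] [NormedSpace ℝ V]
    (β : V →L[ℝ] V →L[ℝ] ℝ) (ψ : ℝ → (V →L[ℝ] V)) (ψ' : V →L[ℝ] V) (t : ℝ)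
    (hψ : HasDerivAt ψ ψ' t) (c : ℝ → ℝ) (c' : ℝ) (hc : HasDerivAt c c' t) :
    HasDerivAt (fun u => c u • pullForm (ψ u) β)
      (c t • (((β.comp ψ').flip.comp (ψ t) + (β.comp (ψ t)).flip.comp ψ').flip)
        + c' • pullForm (ψ t) β) t := by
  have h1 : HasDerivAt (fun u => β.comp (ψ u)) (β.comp ψ') t := by
    simpa using (hasDerivAt_const t β).clm_comp hψ
  have h2 := hasDerivAt_flip h1
  have h3 := h2.clm_comp hψ
  have h4 := hasDerivAt_flip h3
  haveI : IsBoundedSMul ℝ (V →L[ℝ] V →L[ℝ] ℝ) := @NormedSpace.toIsBoundedSMul ℝ (V →L[ℝ] V →L[ℝ] ℝ) _ _ _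
  exact hc.fun_smul (F := V →L[ℝ] V →L[ℝ] ℝ) h4

set_option maxHeartbeats 2000000

/-- Lemma 6.1 (ii) ⇒ (iii) of the paper: if the starting curvature operators of a
`(p,q)`-flow solution satisfy
`c'(0)I + (D - J₀D^tJ₀) = -2P(ω₀,g₀)` and `c'(0)I + (D + D^t) = -2Q(ω₀,g₀)`
for a derivation `D`, then the solution is explicitly the self-similar family
`ω(t) = (c'(0)t+1) ω₀(e^{s(t)D}·, e^{s(t)D}·)`,
`g(t) = (c'(0)t+1) g₀(e^{s(t)D}·, e^{s(t)D}·)`,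
with `s(t) = log(c'(0)t+1)/c'(0)` (and `s(t) = t` if `c'(0) = 0`). -/
theorem soliton_explicit_solution {V : Type*} [NormedAddCommGroup V]
    [InnerProductSpace ℝ V] [FiniteDimensional ℝ V]
    -- the Lie bracket of `g`
    (L : V →L[ℝ] V →L[ℝ] V)
    (halt : ∀ X : V, L X X = 0)
    (hjac : ∀ X Y Z : V, L X (L Y Z) + L Y (L Z X) + L Z (L X Y) = 0)
    (J₀ : V →L[ℝ] V) (hJ₀2 : J₀ ∘L J₀ = -1)
    (hJ₀adj : ContinuousLinearMap.adjoint J₀ = -J₀)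
    -- the curvature operators as functions of the pair `(ω, g)`
    (Pf Qf : (V →L[ℝ] V →L[ℝ] ℝ) → (V →L[ℝ] V →L[ℝ] ℝ) → (V →L[ℝ] V))
    -- scaling invariance: `P(cω,cg) = (1/c)P(ω,g)` and likewise for `Q`
    (hPscal : ∀ (c : ℝ), c ≠ 0 → ∀ ω' g', Pf (c • ω') (c • g') = c⁻¹ • Pf ω' g')
    (hQscal : ∀ (c : ℝ), c ≠ 0 → ∀ ω' g', Qf (c • ω') (c • g') = c⁻¹ • Qf ω' g')
    -- equivariance under automorphisms of the bracket
    (hPaut : ∀ ψ χ : V →L[ℝ] V, ψ ∘L χ = 1 → χ ∘L ψ = 1 →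
      (∀ X Y : V, ψ (L X Y) = L (ψ X) (ψ Y)) →
      ∀ ω' g', Pf (pullForm ψ ω') (pullForm ψ g') = χ ∘L (Pf ω' g') ∘L ψ)
    (hQaut : ∀ ψ χ : V →L[ℝ] V, ψ ∘L χ = 1 → χ ∘L ψ = 1 →
      (∀ X Y : V, ψ (L X Y) = L (ψ X) (ψ Y)) →
      ∀ ω' g', Qf (pullForm ψ ω') (pullForm ψ g') = χ ∘L (Qf ω' g') ∘L ψ)
    -- initial almost-hermitian structure
    (ω₀ g₀ : V →L[ℝ] V →L[ℝ] ℝ)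
    (hω₀ : ∀ X Y : V, ω₀ X Y = ⟪J₀ X, Y⟫)
    (hg₀ : ∀ X Y : V, g₀ X Y = ⟪X, Y⟫)
    -- the `(p,q)`-flow solution starting at `(ω₀, g₀)`
    (ω g : ℝ → (V →L[ℝ] V →L[ℝ] ℝ))
    (hω0 : ω 0 = ω₀) (hg0 : g 0 = g₀)
    (hωflow : ∀ t : ℝ, HasDerivAt ω ((-2 : ℝ) • ((ω t).comp (Pf (ω t) (g t)))) t)
    (hgflow : ∀ t : ℝ, HasDerivAt g ((-2 : ℝ) • ((g t).comp (Qf (ω t) (g t)))) t)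
    -- `γ = c'(0)` and the derivation `D = φ'(0)`
    (γ : ℝ) (D : V →L[ℝ] V)
    (hD : ∀ X Y : V, D (L X Y) = L (D X) Y + L X (D Y))
    -- hypothesis (ii) on the starting curvature operators
    (hsol1 : γ • (1 : V →L[ℝ] V) + (D - J₀ ∘L (ContinuousLinearMap.adjoint D) ∘L J₀)
      = (-2 : ℝ) • Pf ω₀ g₀)
    (hsol2 : γ • (1 : V →L[ℝ] V) + (D + ContinuousLinearMap.adjoint D)
      = (-2 : ℝ) • Qf ω₀ g₀)
    -- uniqueness of solutions of the `(p,q)`-flow on `{t | γt + 1 > 0}`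
    (huniq : ∀ ω' g' : ℝ → (V →L[ℝ] V →L[ℝ] ℝ), ω' 0 = ω₀ → g' 0 = g₀ →
      (∀ t : ℝ, 0 < γ*t + 1 →
        HasDerivAt ω' ((-2 : ℝ) • ((ω' t).comp (Pf (ω' t) (g' t)))) t ∧
        HasDerivAt g' ((-2 : ℝ) • ((g' t).comp (Qf (ω' t) (g' t)))) t) →
      ∀ t : ℝ, 0 < γ*t + 1 → ω' t = ω t ∧ g' t = g t) :
    ∀ t : ℝ, 0 < γ*t + 1 →
      ω t = (γ*t + 1) • pullForm
        (NormedSpace.exp ((if γ = 0 then t else Real.log (γ*t + 1) / γ) • D)) ω₀ ∧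
      g t = (γ*t + 1) • pullForm
        (NormedSpace.exp ((if γ = 0 then t else Real.log (γ*t + 1) / γ) • D)) g₀ := by
  have _inst : CompleteSpace V := FiniteDimensional.complete ℝ V
  set s : ℝ → ℝ := fun t => if γ = 0 then t else Real.log (γ*t + 1) / γ with hsdef
  set ψ : ℝ → V →L[ℝ] V := fun t => NormedSpace.exp (s t • D) with hψdef
  set χ : ℝ → V →L[ℝ] V := fun t => NormedSpace.exp ((-(s t)) • D) with hχdef
  have hs0 : s 0 = 0 := by by_cases h : γ = 0 <;> simp [hsdef, h]
  have hcomm : ∀ (t : ℝ) (x : V), ψ t (D x) = D (ψ t x) := fun t x =>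
    exp_comm_apply D (s t) x
  have haut : ∀ (t : ℝ) (X Y : V), ψ t (L X Y) = L (ψ t X) (ψ t Y) := fun t =>
    exp_derivation_aut L D hD (s t)
  have hψχ : ∀ t : ℝ, ψ t ∘L χ t = 1 := by
    intro t
    have h1 : ψ t * χ t = 1 := by
      rw [hψdef, hχdef]
      letI : NormedAlgebra ℚ (V →L[ℝ] V) := NormedAlgebra.restrictScalars ℚ ℝ (V →L[ℝ] V)
      rw [← NormedSpace.exp_add_of_commute (by rw [neg_smul]; exact (Commute.refl _).neg_right)]
      simp
    exact h1
  have hχψ : ∀ t : ℝ, χ t ∘L ψ t = 1 := by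
    intro t
    have h1 : χ t * ψ t = 1 := by
      rw [hψdef, hχdef]
      letI : NormedAlgebra ℚ (V →L[ℝ] V) := NormedAlgebra.restrictScalars ℚ ℝ (V →L[ℝ] V)
      rw [← NormedSpace.exp_add_of_commute (by rw [neg_smul]; exact (Commute.refl _).neg_left)]
      simp
    exact h1
  have hψχ_apply : ∀ (t : ℝ) (z : V), ψ t (χ t z) = z := by
    intro t z
    have := congrArg (fun f : V →L[ℝ] V => f z) (hψχ t)
    simpa using this
  have hsder : ∀ t : ℝ, 0 < γ*t + 1 → HasDerivAt s ((γ*t + 1)⁻¹) t := by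
    intro t ht
    by_cases h : γ = 0
    · simp only [hsdef, h, if_true]
      simpa [h] using hasDerivAt_id' t
    · have hlin : HasDerivAt (fun t : ℝ => γ*t + 1) γ t := by
        simpa using ((hasDerivAt_id t).const_mul γ).add_const 1
      have hlog : HasDerivAt (fun t : ℝ => Real.log (γ*t + 1)) ((γ*t + 1)⁻¹ * γ) t :=
        by have := (Real.hasDerivAt_log (ne_of_gt ht)).comp t hlin; exact this
      have hdiv := hlog.div_const γ
      simp only [hsdef, if_neg h]
      rw [show (γ*t + 1)⁻¹ = (γ*t + 1)⁻¹ * γ / γ by rw [mul_div_assoc, div_self h, mul_one]]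
      exact hdiv
  have hψd : ∀ t : ℝ, 0 < γ*t + 1 →
      HasDerivAt ψ ((γ*t + 1)⁻¹ • (ψ t ∘L D)) t := by
    intro t ht
    have h := HasDerivAt.scomp t (hasDerivAt_exp_smul_const D (s t)) (hsder t ht)
    exact h
  -- key algebraic identities
  have key1 : ∀ a b : V, (-2 : ℝ) * ω₀ (Pf ω₀ g₀ a) b
      = γ * ω₀ a b + ω₀ (D a) b + ω₀ a (D b) := by
    intro a b
    have h := congrArg (fun f : V →L[ℝ] V => ω₀ (f a) b) hsol1.symm
    simp only [smul_apply, add_apply, sub_apply, comp_apply, one_apply_eq_self, map_add,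
      map_smul, map_sub, smul_eq_mul] at h
    have hJJ : ∀ x : V, J₀ (J₀ x) = -x := by
      intro x
      have := congrArg (fun f : V →L[ℝ] V => f x) hJ₀2
      simpa using this
    have hadj : ⟪(ContinuousLinearMap.adjoint D) (J₀ a), b⟫ = ⟪J₀ a, D b⟫ :=
      ContinuousLinearMap.adjoint_inner_left D b (J₀ a)
    rw [hω₀ (J₀ ((ContinuousLinearMap.adjoint D) (J₀ a))) b] at h
    rw [hJJ, inner_neg_left, hadj] at h
    rw [← hω₀ a (D b)] at h
    linarith [h]
  have key2 : ∀ a b : V, (-2 : ℝ) * g₀ (Qf ω₀ g₀ a) b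
      = γ * g₀ a b + g₀ (D a) b + g₀ a (D b) := by
    intro a b
    have h := congrArg (fun f : V →L[ℝ] V => g₀ (f a) b) hsol2.symm
    simp only [smul_apply, add_apply, comp_apply, one_apply_eq_self, map_add,
      map_smul, smul_eq_mul] at h
    have hadj : g₀ ((ContinuousLinearMap.adjoint D) a) b = g₀ a (D b) := by
      rw [hg₀, hg₀]
      exact ContinuousLinearMap.adjoint_inner_left D b a
    rw [hadj] at h
    linarith [h]
  -- the self-similar candidate solutions
  set ω' : ℝ → (V →L[ℝ] V →L[ℝ] ℝ) := fun t => (γ*t + 1) • pullForm (ψ t) ω₀ with hω'def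
  set g' : ℝ → (V →L[ℝ] V →L[ℝ] ℝ) := fun t => (γ*t + 1) • pullForm (ψ t) g₀ with hg'def
  have hψ0 : ψ 0 = 1 := by rw [hψdef]; simp [hs0]
  have hω'0 : ω' 0 = ω₀ := by rw [hω'def]; simp [hψ0, pullForm_one]
  have hg'0 : g' 0 = g₀ := by rw [hg'def]; simp [hψ0, pullForm_one]
  -- the generic derivative computation
  have hgen : ∀ (β : V →L[ℝ] V →L[ℝ] ℝ) (R : V →L[ℝ] V),
      (∀ a b : V, (-2 : ℝ) * β (R a) b = γ * β a b + β (D a) b + β a (D b)) →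
      ∀ t : ℝ, 0 < γ*t + 1 →
      HasDerivAt (fun u => (γ*u + 1) • pullForm (ψ u) β)
        ((-2 : ℝ) • (((γ*t + 1) • pullForm (ψ t) β).comp
          ((γ*t + 1)⁻¹ • (χ t ∘L R ∘L ψ t)))) t := by
    intro β R hkey t ht
    have hc : HasDerivAt (fun t : ℝ => γ*t + 1) γ t := by
      simpa using ((hasDerivAt_id t).const_mul γ).add_const 1
    have h := pull_hasDerivAt β ψ ((γ*t + 1)⁻¹ • (ψ t ∘L D)) t (hψd t ht)
      (fun t => γ*t + 1) γ hc
    have heq : (γ*t + 1) • (((β.comp ((γ*t + 1)⁻¹ • (ψ t ∘L D))).flip.comp (ψ t)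
          + (β.comp (ψ t)).flip.comp ((γ*t + 1)⁻¹ • (ψ t ∘L D))).flip)
        + γ • pullForm (ψ t) β
        = (-2 : ℝ) • (((γ*t + 1) • pullForm (ψ t) β).comp
          ((γ*t + 1)⁻¹ • (χ t ∘L R ∘L ψ t))) := by
      ext X Y
      simp only [pullForm_apply, smul_apply, add_apply, flip_apply, comp_apply,
        coe_smul', Pi.smul_apply, smul_eq_mul, map_smul]
      rw [hψχ_apply t (R (ψ t X))]
      rw [hcomm t X, hcomm t Y]
      have hk := hkey (ψ t X) (ψ t Y)
      have hne : (γ*t + 1) ≠ 0 := ne_of_gt ht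
      field_simp
      linarith [hk]
    rw [← heq]
    exact h
  -- check the candidate solves the flow
  have hflows : ∀ t : ℝ, 0 < γ*t + 1 →
      HasDerivAt ω' ((-2 : ℝ) • ((ω' t).comp (Pf (ω' t) (g' t)))) t ∧
      HasDerivAt g' ((-2 : ℝ) • ((g' t).comp (Qf (ω' t) (g' t)))) t := by
    intro t ht
    have hne : (γ*t + 1) ≠ 0 := ne_of_gt ht
    have hP : Pf (ω' t) (g' t) = (γ*t + 1)⁻¹ • (χ t ∘L Pf ω₀ g₀ ∘L ψ t) := by
      rw [hω'def, hg'def]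
      rw [hPscal (γ*t + 1) hne, hPaut (ψ t) (χ t) (hψχ t) (hχψ t) (haut t)]
    have hQ : Qf (ω' t) (g' t) = (γ*t + 1)⁻¹ • (χ t ∘L Qf ω₀ g₀ ∘L ψ t) := by
      rw [hω'def, hg'def]
      rw [hQscal (γ*t + 1) hne, hQaut (ψ t) (χ t) (hψχ t) (hχψ t) (haut t)]
    constructor
    · rw [hP]
      exact hgen ω₀ (Pf ω₀ g₀) key1 t ht
    · rw [hQ]
      exact hgen g₀ (Qf ω₀ g₀) key2 t ht
  intro t ht
  obtain ⟨h1, h2⟩ := huniq ω' g' hω'0 hg'0 hflows t ht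
  exact ⟨h1.symm, h2.symm⟩
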